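/- Let Tribes_{w,s} : {0,1}^{sw} → {0,1} be the OR of s disjoint ANDs of width w, with s the largest integer such that 1 − (1 − 2^{-w})^s ≤ 1/2, and n = sw. Let μ⁰ and μ¹ be the uniform distributions on Tribes^{-1}(0) and Tribes^{-1}(1) respectively. Then W₁(μ⁰, μ¹) = O(log n); concretely, there is a coupling transporting μ⁰ to μ¹ with expected Hamming distance at most E[L]·w where L is Bin(s, 2^{-w}) conditioned on being positive, and E[L]·w = O(log n). -/

import Mathlib

open Finset
open scoped Classical

/-- The ℓ¹-Wasserstein distance between two mass functions on a finite type. -/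
noncomputable def W1 {X : Type*} [Fintype X] (d : X → X → ℝ) (p q : X → ℝ) : ℝ :=
  sInf {c : ℝ | ∃ Q : X → X → ℝ,
    (∀ a b, 0 ≤ Q a b) ∧
    (∀ a, ∑ b, Q a b = p a) ∧
    (∀ b, ∑ a, Q a b = q b) ∧
    c = ∑ a, ∑ b, d a b * Q a b}

/-- The tribes function on `s` tribes of width `w`: the OR of `s` disjoint ANDs. -/
def tribes (s w : ℕ) (x : Fin s × Fin w → Bool) : Prop :=
  ∃ t : Fin s, ∀ j : Fin w, x (t, j) = true

/-- The uniform mass function on `{x : Tribes(x) = b}`. -/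
noncomputable def tribesUnif (s w : ℕ) (b : Prop) : (Fin s × Fin w → Bool) → ℝ :=
  fun x => if tribes s w x ↔ b then
    (1 : ℝ) / ((univ : Finset (Fin s × Fin w → Bool)).filter fun z => tribes s w z ↔ b).card
  else 0

namespace S18

noncomputable def Sy (s w : ℕ) (y : Fin s × Fin w → Bool) : Finset (Fin s) :=
  univ.filter fun i => ∀ j, y (i, j) = true

lemma mem_Sy {s w : ℕ} {y : Fin s × Fin w → Bool} {i : Fin s} :
    i ∈ Sy s w y ↔ ∀ j, y (i, j) = true := by simp [Sy]

lemma tribes_iff {s w : ℕ} (y : Fin s × Fin w → Bool) :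
    tribes s w y ↔ (Sy s w y).Nonempty := by
  simp [tribes, Sy, Finset.filter_nonempty_iff]

lemma sum_powerset_pow {α : Type*} [DecidableEq α] (u : Finset α) (p q : ℝ) :
    ∑ T ∈ u.powerset, p ^ T.card * q ^ (u.card - T.card) = (p + q) ^ u.card := by
  rw [← Finset.prod_const, Finset.prod_add]
  refine (Finset.sum_congr rfl fun T hT => ?_).symm
  rw [Finset.prod_const, Finset.prod_const, Finset.card_sdiff_of_subset (Finset.mem_powerset.mp hT)]

lemma sum_powerset_card_pow {α : Type*} [DecidableEq α] (u : Finset α) (p q : ℝ) :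
    ∑ T ∈ u.powerset, (T.card : ℝ) * (p ^ T.card * q ^ (u.card - T.card)) =
      u.card * (p * (p + q) ^ (u.card - 1)) := by
  have hcard : ∀ T ∈ u.powerset, (T.card : ℝ) = ∑ i ∈ u, if i ∈ T then (1:ℝ) else 0 := by
    intro T hT
    rw [Finset.sum_boole, Finset.filter_mem_eq_inter,
      Finset.inter_eq_right.mpr (Finset.mem_powerset.mp hT)]
  calc ∑ T ∈ u.powerset, (T.card : ℝ) * (p ^ T.card * q ^ (u.card - T.card))
      = ∑ T ∈ u.powerset, ∑ i ∈ u,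
          (if i ∈ T then (1:ℝ) else 0) * (p ^ T.card * q ^ (u.card - T.card)) := by
        refine Finset.sum_congr rfl fun T hT => ?_
        rw [← Finset.sum_mul, ← hcard T hT]
    _ = ∑ i ∈ u, ∑ T ∈ u.powerset,
          (if i ∈ T then (1:ℝ) else 0) * (p ^ T.card * q ^ (u.card - T.card)) :=
        Finset.sum_comm
    _ = ∑ i ∈ u, p * (p + q) ^ (u.card - 1) := by
        refine Finset.sum_congr rfl fun i hi => ?_
        have : ∑ T ∈ u.powerset, (if i ∈ T then (1:ℝ) else 0) * (p ^ T.card * q ^ (u.card - T.card))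
            = ∑ T ∈ u.powerset.filter (fun T => i ∈ T), p ^ T.card * q ^ (u.card - T.card) := by
          rw [Finset.sum_filter]
          refine Finset.sum_congr rfl fun T _ => ?_
          split_ifs <;> simp
        rw [this]
        have hb : ∑ T ∈ u.powerset.filter (fun T => i ∈ T), p ^ T.card * q ^ (u.card - T.card)
            = ∑ T' ∈ (u.erase i).powerset, p * (p ^ T'.card * q ^ ((u.erase i).card - T'.card)) := by
          refine Finset.sum_bij' (fun T _ => T.erase i) (fun T' _ => insert i T') ?_ ?_ ?_ ?_ ?_
          · intro T hT
            rw [Finset.mem_filter, Finset.mem_powerset] at hT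
            exact Finset.mem_powerset.mpr (Finset.erase_subset_erase _ hT.1)
          · intro T' hT'
            rw [Finset.mem_powerset] at hT'
            refine Finset.mem_filter.mpr ⟨Finset.mem_powerset.mpr ?_, Finset.mem_insert_self _ _⟩
            exact Finset.insert_subset hi (hT'.trans (Finset.erase_subset _ _))
          · intro T hT
            rw [Finset.mem_filter] at hT
            exact Finset.insert_erase hT.2
          · intro T' hT'
            rw [Finset.mem_powerset] at hT'
            exact Finset.erase_insert (fun h => (Finset.notMem_erase i u) (hT' h))
          · intro T hT
            rw [Finset.mem_filter, Finset.mem_powerset] at hT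
            have h1 : (T.erase i).card + 1 = T.card := Finset.card_erase_add_one hT.2
            have h2 : (u.erase i).card + 1 = u.card := Finset.card_erase_add_one hi
            have h3 : T.card ≤ u.card := Finset.card_le_card hT.1
            rw [h1.symm]
            have e2 : u.card - ((T.erase i).card + 1) = (u.erase i).card - (T.erase i).card := by
              omega
            rw [e2, pow_succ]
            ring
        rw [hb, ← Finset.mul_sum, sum_powerset_pow, Finset.card_erase_of_mem hi]
    _ = u.card * (p * (p + q) ^ (u.card - 1)) := by rw [Finset.sum_const, nsmul_eq_mul]

lemma card_notOnes (w : ℕ) :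
    Fintype.card {g : Fin w → Bool // ¬ ∀ j, g j = true} = 2 ^ w - 1 := by
  rw [Fintype.card_subtype_compl]
  have h1 : Fintype.card {g : Fin w → Bool // ∀ j, g j = true} = 1 :=
    Fintype.card_eq_one_iff.mpr ⟨⟨fun _ => true, fun _ => rfl⟩, by
      rintro ⟨g, hg⟩; exact Subtype.ext (funext fun j => hg j)⟩
  rw [h1]
  simp [Fintype.card_fun]

lemma card_filter_not_tribes (s w : ℕ) :
    ((univ : Finset (Fin s × Fin w → Bool)).filter fun x => ¬ tribes s w x).card
      = (2 ^ w - 1) ^ s := by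
  rw [← Fintype.card_subtype]
  have e : {x : Fin s × Fin w → Bool // ¬ tribes s w x} ≃
      (Fin s → {g : Fin w → Bool // ¬ ∀ j, g j = true}) := by
    refine Equiv.trans ?_ (Equiv.subtypePiEquivPi (β := fun _ : Fin s => Fin w → Bool)
      (p := fun _ g => ¬ ∀ j, g j = true))
    exact (Equiv.curry (Fin s) (Fin w) Bool).subtypeEquiv (fun x => by
      simp [tribes, not_exists, Equiv.curry, Function.curry])
  rw [Fintype.card_congr e, Fintype.card_fun, card_notOnes, Fintype.card_fin]

lemma card_col (s w : ℕ) (y : Fin s × Fin w → Bool) :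
    ((univ : Finset (Fin s × Fin w → Bool)).filter fun x =>
        ¬ tribes s w x ∧ ∀ i ∉ Sy s w y, ∀ j, x (i, j) = y (i, j)).card
      = (2 ^ w - 1) ^ (Sy s w y).card := by
  rw [← Fintype.card_subtype]
  have e : {x : Fin s × Fin w → Bool //
        ¬ tribes s w x ∧ ∀ i ∉ Sy s w y, ∀ j, x (i, j) = y (i, j)} ≃
      (Sy s w y → {g : Fin w → Bool // ¬ ∀ j, g j = true}) :=
    { toFun := fun x i => ⟨fun j => x.1 (i.1, j), fun h => x.2.1 ⟨i.1, h⟩⟩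
      invFun := fun f => ⟨fun pr => if h : pr.1 ∈ Sy s w y then (f ⟨pr.1, h⟩).1 pr.2 else y pr, by
        constructor
        · rintro ⟨t, ht⟩
          by_cases h : t ∈ Sy s w y
          · exact (f ⟨t, h⟩).2 (fun j => by simpa [h] using ht j)
          · exact h (mem_Sy.mpr fun j => by
              have := ht j
              simpa [h] using this)
        · intro i hi j
          simp [hi]⟩
      left_inv := by
        rintro ⟨x, hx1, hx2⟩
        refine Subtype.ext (funext fun pr => ?_)
        by_cases h : pr.1 ∈ Sy s w y
        · simp [h]
        · simpa [h] using (hx2 pr.1 h pr.2).symm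
      right_inv := by
        intro f
        refine funext fun i => Subtype.ext (funext fun j => ?_)
        simp }
  rw [Fintype.card_congr e, Fintype.card_fun, card_notOnes, Fintype.card_coe]

end S18

open S18

set_option maxHeartbeats 2000000 in
/-- For the (near-balanced) tribes function, `W₁(μ⁰, μ¹) = O(log n)`: concretely, the
transport cost is at most `E[L]·w` where `L ~ Bin(s, 2^{-w})` conditioned on being
positive, and `E[L]·w = s·2^{-w}/(1 − (1 − 2^{-w})^s) · w ≤ C·log(sw)`. -/
theorem stmt18 :
    ∃ C : ℝ, 0 < C ∧ ∀ w s : ℕ, 2 ≤ w → 0 < s →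
      1 - (1 - (2 : ℝ) ^ (-(w : ℤ))) ^ s ≤ 1 / 2 →
      1 / 2 < 1 - (1 - (2 : ℝ) ^ (-(w : ℤ))) ^ (s + 1) →
      W1 (fun x y : Fin s × Fin w → Bool => (hammingDist x y : ℝ))
          (tribesUnif s w False) (tribesUnif s w True) ≤
        (s * (2 : ℝ) ^ (-(w : ℤ)) / (1 - (1 - (2 : ℝ) ^ (-(w : ℤ))) ^ s)) * w ∧
      (s * (2 : ℝ) ^ (-(w : ℤ)) / (1 - (1 - (2 : ℝ) ^ (-(w : ℤ))) ^ s)) * w ≤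
        C * Real.log (s * w) := by
  refine ⟨3, by norm_num, fun w s hw hs h1 h2 => ?_⟩
  have hM4 : (4:ℝ) ≤ (2:ℝ) ^ w := by
    calc (4:ℝ) = 2 ^ 2 := by norm_num
    _ ≤ 2 ^ w := pow_le_pow_right₀ one_le_two hw
  have hM0 : (0:ℝ) < (2:ℝ) ^ w := by positivity
  have hpM : (2:ℝ) ^ (-(w:ℤ)) = ((2:ℝ) ^ w)⁻¹ := by
    rw [zpow_neg, zpow_natCast]
  rw [hpM] at h1 h2 ⊢
  set M : ℝ := (2:ℝ) ^ w with hMdef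
  set p : ℝ := M⁻¹ with hpdef
  set q : ℝ := 1 - p with hqdef
  set D : ℝ := 1 - q ^ s with hDdef
  have hp0 : 0 < p := by positivity
  have hp4 : p ≤ 1/4 := by
    rw [hpdef]
    rw [show (1:ℝ)/4 = 4⁻¹ by norm_num]
    exact inv_anti₀ (by norm_num) hM4
  have hq0 : (0:ℝ) ≤ q := by rw [hqdef]; linarith
  have hq34 : (3:ℝ)/4 ≤ q := by rw [hqdef]; linarith
  have hq1 : q < 1 := by rw [hqdef]; linarith
  have hD0 : 0 < D := by
    have : q ^ s < 1 := pow_lt_one₀ hq0 hq1 hs.ne'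
    rw [hDdef]; linarith
  have hpq : p + q = 1 := by rw [hqdef]; ring
  constructor
  · -- coupling part
    set c0 : ℝ := ((M-1)^s)⁻¹ with hc0def
    have hM1 : (3:ℝ) ≤ M - 1 := by linarith
    have hM1' : (0:ℝ) < M - 1 := by linarith
    have hcast : ((2^w - 1 : ℕ) : ℝ) = M - 1 := by
      have h12 : 1 ≤ 2^w := Nat.one_le_two_pow
      rw [Nat.cast_sub h12]
      push_cast
      rw [hMdef]
    set cond : (Fin s × Fin w → Bool) → (Fin s × Fin w → Bool) → Prop := fun x y =>
      ¬ tribes s w x ∧ tribes s w y ∧ ∀ i ∉ Sy s w y, ∀ j, x (i, j) = y (i, j) with hconddef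
    set val : Finset (Fin s) → ℝ := fun T => c0 * (p ^ T.card * q ^ (s - T.card)) / D
      with hvaldef
    set Q : (Fin s × Fin w → Bool) → (Fin s × Fin w → Bool) → ℝ := fun x y =>
      if cond x y then val (Sy s w y) else 0 with hQdef
    have hval0 : ∀ T, 0 ≤ val T := fun T => by
      rw [hvaldef]
      have : (0:ℝ) ≤ c0 := by rw [hc0def]; positivity
      positivity
    have hQ0 : ∀ a b, 0 ≤ Q a b := fun a b => by
      rw [hQdef]; dsimp only; split_ifs
      · exact hval0 _
      · exact le_refl 0
    -- key row computation
    have key : ∀ (F : ℕ → ℝ) (x : Fin s × Fin w → Bool), ¬ tribes s w x →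
        ∑ y, F (Sy s w y).card * Q x y
          = ∑ T ∈ (univ : Finset (Fin s)).powerset.filter Finset.Nonempty,
              F T.card * val T := by
      intro F x hx
      have hSyT : ∀ T : Finset (Fin s),
          Sy s w (fun pr : Fin s × Fin w => if pr.1 ∈ T then true else x pr) = T := by
        intro T; ext i
        rw [mem_Sy]
        constructor
        · intro h; by_contra hiT
          exact hx ⟨i, fun j => by simpa [hiT] using h j⟩
        · intro hiT j; simp [hiT]
      have e1 : ∑ y, F (Sy s w y).card * Q x y
          = ∑ y ∈ univ.filter (fun y => tribes s w y ∧
              ∀ i ∉ Sy s w y, ∀ j, x (i,j) = y (i,j)),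
              F (Sy s w y).card * val (Sy s w y) := by
        rw [Finset.sum_filter]
        refine Finset.sum_congr rfl fun y _ => ?_
        by_cases h : tribes s w y ∧ ∀ i ∉ Sy s w y, ∀ j, x (i,j) = y (i,j)
        · rw [if_pos h, hQdef]; dsimp only
          rw [if_pos ⟨hx, h.1, h.2⟩]
        · rw [if_neg h, hQdef]; dsimp only
          rw [if_neg (fun hc => h ⟨hc.2.1, hc.2.2⟩), mul_zero]
      rw [e1]
      refine Finset.sum_bij' (fun y _ => Sy s w y)
        (fun T _ => (fun pr : Fin s × Fin w => if pr.1 ∈ T then true else x pr))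
        ?_ ?_ ?_ ?_ ?_
      · intro y hy
        rw [Finset.mem_filter] at hy ⊢
        exact ⟨Finset.mem_powerset.mpr (Finset.subset_univ _), (tribes_iff y).mp hy.2.1⟩
      · intro T hT
        rw [Finset.mem_filter] at hT ⊢
        refine ⟨Finset.mem_univ _, (tribes_iff _).mpr ?_, ?_⟩
        · rw [hSyT T]; exact hT.2
        · intro i hi j
          rw [hSyT T] at hi
          simp [hi]
      · intro y hy
        rw [Finset.mem_filter] at hy
        funext pr
        by_cases h : pr.1 ∈ Sy s w y
        · simp only [h, if_pos]
          exact ((mem_Sy.mp h) pr.2).symm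
        · simp only [h, if_neg, if_false]
          exact hy.2.2 pr.1 h pr.2
      · intro T hT
        exact hSyT T
      · intro y hy
        rfl
    have hA : (univ : Finset (Fin s)).powerset.filter Finset.Nonempty
        = ((univ : Finset (Fin s)).powerset).erase ∅ := by
      ext T
      simp [Finset.nonempty_iff_ne_empty, and_comm]
    have hsum1 : ∑ T ∈ (univ : Finset (Fin s)).powerset.filter Finset.Nonempty,
        p ^ T.card * q ^ (s - T.card) = D := by
      have htot := sum_powerset_pow (univ : Finset (Fin s)) p q
      rw [Finset.card_univ, Fintype.card_fin, hpq, one_pow] at htot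
      have hins := Finset.add_sum_erase (univ : Finset (Fin s)).powerset
        (fun T => p ^ T.card * q ^ (s - T.card))
        (Finset.mem_powerset.mpr (Finset.empty_subset _))
      simp only [Finset.card_empty, pow_zero, Nat.sub_zero, one_mul] at hins
      rw [hA, hDdef]
      linarith
    have hsum2 : ∑ T ∈ (univ : Finset (Fin s)).powerset.filter Finset.Nonempty,
        (T.card : ℝ) * (p ^ T.card * q ^ (s - T.card)) ≤ (s:ℝ) * p := by
      have hle : ∑ T ∈ (univ : Finset (Fin s)).powerset.filter Finset.Nonempty,
          (T.card : ℝ) * (p ^ T.card * q ^ (s - T.card))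
          ≤ ∑ T ∈ (univ : Finset (Fin s)).powerset,
          (T.card : ℝ) * (p ^ T.card * q ^ (s - T.card)) := by
        refine Finset.sum_le_sum_of_subset_of_nonneg (Finset.filter_subset _ _) ?_
        intro T _ _
        positivity
      have htot := sum_powerset_card_pow (univ : Finset (Fin s)) p q
      rw [Finset.card_univ, Fintype.card_fin, hpq, one_pow, mul_one] at htot
      linarith
    have hN0 : (((univ : Finset (Fin s × Fin w → Bool)).filter
        fun x => ¬ tribes s w x).card : ℝ) = (M-1)^s := by
      rw [card_filter_not_tribes, Nat.cast_pow, hcast]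
    -- row marginals
    have hrow : ∀ x, ∑ y, Q x y = tribesUnif s w False x := by
      intro x
      by_cases hx : tribes s w x
      · have hz : ∀ y, Q x y = 0 := fun y => by
          rw [hQdef]; dsimp only; rw [if_neg (fun hc => hc.1 hx)]
        rw [Finset.sum_congr rfl (fun y _ => hz y), Finset.sum_const, smul_zero]
        simp [tribesUnif, hx]
      · have h1' := key (fun _ => (1:ℝ)) x hx
        simp only [one_mul] at h1'
        rw [h1']
        have hvs : ∑ T ∈ (univ : Finset (Fin s)).powerset.filter Finset.Nonempty, val T
            = c0 := by
          have : ∀ T ∈ (univ : Finset (Fin s)).powerset.filter Finset.Nonempty,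
              val T = (c0 / D) * (p ^ T.card * q ^ (s - T.card)) := by
            intro T _; rw [hvaldef]; ring
          rw [Finset.sum_congr rfl this, ← Finset.mul_sum, hsum1, div_mul_cancel₀ _ hD0.ne']
        rw [hvs]
        have hcondF : (tribes s w x ↔ False) := iff_false_intro hx
        rw [tribesUnif, if_pos hcondF]
        simp only [iff_false]
        rw [hN0, hc0def, one_div]
    -- column marginals
    have hcol : ∀ y, ∑ x, Q x y = tribesUnif s w True y := by
      intro y
      by_cases hy : tribes s w y
      · have e1 : ∑ x, Q x y = ∑ x ∈ (univ : Finset (Fin s × Fin w → Bool)).filter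
            (fun x => ¬tribes s w x ∧ ∀ i ∉ Sy s w y, ∀ j, x (i,j) = y (i,j)),
            val (Sy s w y) := by
          rw [Finset.sum_filter]
          refine Finset.sum_congr rfl fun x _ => ?_
          by_cases h : ¬tribes s w x ∧ ∀ i ∉ Sy s w y, ∀ j, x (i,j) = y (i,j)
          · rw [if_pos h, hQdef]; dsimp only
            rw [if_pos ⟨h.1, hy, h.2⟩]
          · rw [if_neg h, hQdef]; dsimp only
            rw [if_neg (fun hc => h ⟨hc.1, hc.2.2⟩)]
        rw [e1, Finset.sum_const, card_col, nsmul_eq_mul]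
        set k := (Sy s w y).card with hkdef
        have hks : k ≤ s := by
          rw [hkdef]
          calc (Sy s w y).card ≤ (univ : Finset (Fin s)).card :=
            Finset.card_le_card (Finset.subset_univ _)
          _ = s := by rw [Finset.card_univ, Fintype.card_fin]
        -- value computation
        have hcastk : (((2^w-1 : ℕ)^k : ℕ) : ℝ) = (M-1)^k := by
          rw [Nat.cast_pow, hcast]
        have hq' : q = (M-1) * M⁻¹ := by
          rw [hqdef, hpdef]
          field_simp
        have hval2 : ((M-1):ℝ)^k * val (Sy s w y) = 1/(M^s * D) := by
          rw [hvaldef]; dsimp only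
          rw [← hkdef, hq', mul_pow, hpdef, hc0def]
          have e2 : (M-1)^k * (((M-1)^s)⁻¹ * ((M⁻¹)^k * ((M-1)^(s-k) * (M⁻¹)^(s-k))) / D)
              = ((M-1)^k * (M-1)^(s-k)) * (((M⁻¹)^k * (M⁻¹)^(s-k)) * (((M-1)^s)⁻¹ / D)) := by
            ring
          rw [e2, pow_mul_pow_sub _ hks, pow_mul_pow_sub _ hks, inv_pow]
          field_simp
        -- N1 computation
        have hcardsum : ((univ : Finset (Fin s × Fin w → Bool)).filter
              fun z => tribes s w z).card
            + ((univ : Finset (Fin s × Fin w → Bool)).filter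
              fun z => ¬ tribes s w z).card = 2^(s*w) := by
          rw [Finset.card_filter_add_card_filter_not, Finset.card_univ]
          simp [Fintype.card_fun]
        have hMs : ((2:ℝ))^(s*w) = M^s := by
          rw [hMdef, ← pow_mul, mul_comm]
        have hMq : M * q = M - 1 := by
          rw [hq']
          field_simp
        have hMsq : M^s * q^s = (M-1)^s := by
          rw [← mul_pow, hMq]
        have hN1 : (((univ : Finset (Fin s × Fin w → Bool)).filter
            fun z => tribes s w z).card : ℝ) = M^s * D := by
          have hcs : (((univ : Finset (Fin s × Fin w → Bool)).filter
              fun z => tribes s w z).card : ℝ)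
              = (2:ℝ)^(s*w) - (M-1)^s := by
            have := hcardsum
            have hle : ((univ : Finset (Fin s × Fin w → Bool)).filter
                fun z => ¬ tribes s w z).card ≤ 2^(s*w) := by omega
            have hcast2 : (((univ : Finset (Fin s × Fin w → Bool)).filter
                fun z => tribes s w z).card : ℝ)
                + (((univ : Finset (Fin s × Fin w → Bool)).filter
                fun z => ¬ tribes s w z).card : ℝ) = (2:ℝ)^(s*w) := by
              exact_mod_cast congrArg (Nat.cast (R := ℝ)) hcardsum
            rw [hN0] at hcast2
            linarith
          rw [hcs, hMs, hDdef]
          rw [mul_sub, mul_one, hMsq]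
        rw [tribesUnif, if_pos (iff_true_intro hy)]
        simp only [iff_true]
        rw [hN1, hcastk, hval2]
      · have hz : ∀ x, Q x y = 0 := fun x => by
          rw [hQdef]; dsimp only; rw [if_neg (fun hc => hy hc.2.1)]
        rw [Finset.sum_congr rfl (fun x _ => hz x), Finset.sum_const, smul_zero]
        simp [tribesUnif, hy]
    -- hamming bound
    have hham : ∀ x y, cond x y → (hammingDist x y : ℝ) ≤ (w:ℝ) * (Sy s w y).card := by
      intro x y hc
      rw [hconddef] at hc
      have hsub : ((univ : Finset (Fin s × Fin w)).filter fun pr => x pr ≠ y pr)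
          ⊆ (Sy s w y) ×ˢ (univ : Finset (Fin w)) := by
        intro pr hpr
        rw [Finset.mem_filter] at hpr
        rw [Finset.mem_product]
        refine ⟨?_, Finset.mem_univ _⟩
        by_contra h
        exact hpr.2 (hc.2.2 pr.1 h pr.2)
      have hcard := Finset.card_le_card hsub
      rw [Finset.card_product, Finset.card_univ, Fintype.card_fin] at hcard
      have hhd : hammingDist x y
          = ((univ : Finset (Fin s × Fin w)).filter fun pr => x pr ≠ y pr).card := by
        simp [hammingDist]
      have : hammingDist x y ≤ (Sy s w y).card * w := by rw [hhd]; exact hcard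
      calc (hammingDist x y : ℝ) ≤ (((Sy s w y).card * w : ℕ) : ℝ) := Nat.cast_le.mpr this
      _ = (w:ℝ) * (Sy s w y).card := by push_cast; ring
    -- membership and bound
    have hbdd : BddBelow {c : ℝ | ∃ Q : (Fin s × Fin w → Bool) → (Fin s × Fin w → Bool) → ℝ,
        (∀ a b, 0 ≤ Q a b) ∧
        (∀ a, ∑ b, Q a b = tribesUnif s w False a) ∧
        (∀ b, ∑ a, Q a b = tribesUnif s w True b) ∧
        c = ∑ a, ∑ b, (hammingDist a b : ℝ) * Q a b} := by
      refine ⟨0, ?_⟩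
      rintro c ⟨Q', hQ0', _, _, rfl⟩
      refine Finset.sum_nonneg fun a _ => Finset.sum_nonneg fun b _ => ?_
      exact mul_nonneg (Nat.cast_nonneg _) (hQ0' a b)
    have hmem : (∑ a, ∑ b, (hammingDist a b : ℝ) * Q a b) ∈
        {c : ℝ | ∃ Q : (Fin s × Fin w → Bool) → (Fin s × Fin w → Bool) → ℝ,
        (∀ a b, 0 ≤ Q a b) ∧
        (∀ a, ∑ b, Q a b = tribesUnif s w False a) ∧
        (∀ b, ∑ a, Q a b = tribesUnif s w True b) ∧
        c = ∑ a, ∑ b, (hammingDist a b : ℝ) * Q a b} := ⟨Q, hQ0, hrow, hcol, rfl⟩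
    have hW1le : W1 (fun x y : Fin s × Fin w → Bool => (hammingDist x y : ℝ))
        (tribesUnif s w False) (tribesUnif s w True)
        ≤ ∑ a, ∑ b, (hammingDist a b : ℝ) * Q a b := csInf_le hbdd hmem
    -- cost bound
    have hstep1 : (∑ a, ∑ b, (hammingDist a b : ℝ) * Q a b)
        ≤ ∑ a, ∑ b, ((w:ℝ) * (Sy s w b).card) * Q a b := by
      refine Finset.sum_le_sum fun a _ => Finset.sum_le_sum fun b _ => ?_
      by_cases hc : cond a b
      · exact mul_le_mul_of_nonneg_right (hham a b hc) (hQ0 a b)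
      · have : Q a b = 0 := by rw [hQdef]; dsimp only; rw [if_neg hc]
        rw [this, mul_zero, mul_zero]
    set R : ℝ := (w:ℝ) * ((s:ℝ) * p) * (c0 / D) with hRdef
    have hinner : ∀ a : Fin s × Fin w → Bool,
        ∑ b, ((w:ℝ) * (Sy s w b).card) * Q a b
          ≤ (if tribes s w a then 0 else R) := by
      intro a
      by_cases ha : tribes s w a
      · rw [if_pos ha]
        have hz : ∀ b, ((w:ℝ) * (Sy s w b).card) * Q a b = 0 := fun b => by
          have : Q a b = 0 := by rw [hQdef]; dsimp only; rw [if_neg (fun hc => hc.1 ha)]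
          rw [this, mul_zero]
        rw [Finset.sum_congr rfl (fun b _ => hz b), Finset.sum_const, smul_zero]
      · rw [if_neg ha]
        have hk := key (fun kk => (w:ℝ) * kk) a ha
        rw [hk]
        have he : ∀ T ∈ (univ : Finset (Fin s)).powerset.filter Finset.Nonempty,
            ((w:ℝ) * T.card) * val T
              = ((w:ℝ) * (c0 / D)) * ((T.card:ℝ) * (p ^ T.card * q ^ (s - T.card))) := by
          intro T _; rw [hvaldef]; ring
        rw [Finset.sum_congr rfl he, ← Finset.mul_sum]
        have hnn : (0:ℝ) ≤ (w:ℝ) * (c0 / D) := by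
          have hc0nn : (0:ℝ) ≤ c0 := by rw [hc0def]; positivity
          positivity
        calc ((w:ℝ) * (c0 / D)) * ∑ T ∈ (univ : Finset (Fin s)).powerset.filter
              Finset.Nonempty, (T.card:ℝ) * (p ^ T.card * q ^ (s - T.card))
            ≤ ((w:ℝ) * (c0 / D)) * ((s:ℝ) * p) := mul_le_mul_of_nonneg_left hsum2 hnn
        _ = R := by rw [hRdef]; ring
    have hstep2 : (∑ a, ∑ b, ((w:ℝ) * (Sy s w b).card) * Q a b)
        ≤ (s:ℝ) * p / D * w := by
      calc (∑ a, ∑ b, ((w:ℝ) * (Sy s w b).card) * Q a b)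
          ≤ ∑ a, (if tribes s w a then 0 else R) :=
            Finset.sum_le_sum fun a _ => hinner a
      _ = (((univ : Finset (Fin s × Fin w → Bool)).filter
            fun z => ¬ tribes s w z).card : ℝ) * R := by
          rw [Finset.sum_ite, Finset.sum_const, Finset.sum_const, smul_zero, zero_add,
            nsmul_eq_mul]
      _ = (s:ℝ) * p / D * w := by
          rw [hN0, hRdef, hc0def]
          have hMne : ((M-1):ℝ)^s ≠ 0 := pow_ne_zero _ hM1'.ne'
          field_simp
    linarith
  · -- analytic part
    have hq12 : (1:ℝ)/2 ≤ q ^ s := by rw [hDdef] at h1; linarith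
    have hsp : (s:ℝ) * p ≤ Real.log 2 := by
      have hb : q ≤ Real.exp (-p) := by
        have := Real.add_one_le_exp (-p)
        rw [hqdef]; linarith
      have hqs : q ^ s ≤ Real.exp (-((s:ℝ) * p)) := by
        calc q ^ s ≤ (Real.exp (-p)) ^ s := pow_le_pow_left₀ hq0 hb s
        _ = Real.exp (-((s:ℝ) * p)) := by
            rw [← Real.exp_nat_mul]; ring_nf
      have h12 : (1:ℝ)/2 ≤ Real.exp (-((s:ℝ) * p)) := le_trans hq12 hqs
      have hlog := Real.log_le_log (by norm_num : (0:ℝ) < 1/2) h12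
      rw [Real.log_exp] at hlog
      have hl : Real.log (1/2) = - Real.log 2 := by
        rw [one_div, Real.log_inv]
      linarith
    have hD3 : (1:ℝ)/3 ≤ D := by
      have hqs1 : q ^ (s+1) < 1/2 := by linarith
      have he : q ^ (s+1) = q ^ s * q := pow_succ q s
      have hqsnn : (0:ℝ) ≤ q ^ s := pow_nonneg hq0 s
      have : q ^ s * (3/4) ≤ q ^ s * q := mul_le_mul_of_nonneg_left hq34 hqsnn
      rw [hDdef]; nlinarith
    have hsw : (2:ℕ)^w ≤ s * w := by
      have hbern : 1 + ((s:ℝ)+1) * (-p) ≤ (1 + (-p)) ^ (s+1) := by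
        have := one_add_mul_le_pow (by linarith : (-2:ℝ) ≤ -p) (s+1)
        convert this using 3
        · rfl
        · push_cast; ring
      have hq2 : (1 + (-p)) = q := by rw [hqdef]; ring
      rw [hq2] at hbern
      have hqs1 : q ^ (s+1) < 1/2 := by linarith
      have hsp2 : (1:ℝ)/2 < ((s:ℝ)+1) * p := by nlinarith
      have hpM1 : p * M = 1 := by rw [hpdef]; exact inv_mul_cancel₀ hM0.ne'
      have hsM : M < 2 * ((s:ℝ)+1) := by nlinarith
      have hcast : ((2^w : ℕ):ℝ) = M := by rw [hMdef]; push_cast; ring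
      have hn : (2:ℕ)^w < 2 * (s+1) := by
        have : ((2^w:ℕ):ℝ) < ((2*(s+1) : ℕ):ℝ) := by rw [hcast]; push_cast; linarith
        exact_mod_cast this
      have hw1 : 1 ≤ w := le_trans (by norm_num) hw
      have h2w : (2:ℕ)^w = 2 * 2^(w-1) := by
        rw [← pow_succ']
        congr 1
        omega
      have hk : 2^(w-1) ≤ s := by omega
      calc (2:ℕ)^w = 2^(w-1) * 2 := by omega
      _ ≤ s * w := Nat.mul_le_mul hk hw
    have hlogsw : (w:ℝ) * Real.log 2 ≤ Real.log ((s:ℝ) * w) := by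
      have h2w0 : (0:ℝ) < ((2^w : ℕ):ℝ) := by positivity
      have hle : ((2^w : ℕ):ℝ) ≤ (s:ℝ) * w := by exact_mod_cast hsw
      have := Real.log_le_log h2w0 hle
      rwa [show ((2^w:ℕ):ℝ) = (2:ℝ)^w by push_cast; ring, Real.log_pow] at this
    have hDnn : 0 ≤ (s:ℝ) * p := by positivity
    have hdiv : (s:ℝ) * p / D ≤ 3 * ((s:ℝ) * p) := by
      rw [div_le_iff₀ hD0]
      nlinarith
    calc (s:ℝ) * p / D * w ≤ 3 * ((s:ℝ) * p) * w := by
          have hw0 : (0:ℝ) ≤ (w:ℝ) := by positivity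
          exact mul_le_mul_of_nonneg_right hdiv hw0
    _ ≤ 3 * Real.log 2 * w := by
          have hw0 : (0:ℝ) ≤ (w:ℝ) := by positivity
          have : 3 * ((s:ℝ)*p) ≤ 3 * Real.log 2 := by linarith
          exact mul_le_mul_of_nonneg_right this hw0
    _ = 3 * ((w:ℝ) * Real.log 2) := by ring
    _ ≤ 3 * Real.log ((s:ℝ) * w) := by linarith
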